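/- Let R be a ring and C a class of right R-modules closed under submodules and homomorphic images. If C is precovering, then there is a right R-module M such that C = Gen(M), and moreover C equals the class σ[M] of modules subgenerated by M. -/

import Mathlib

universe u

/-- A class of modules is precovering if every module has a `C`-precover. -/
def Precovering {R : Type u} [Ring R] (C : ModuleCat.{u} R → Prop) : Prop :=
  ∀ M : ModuleCat.{u} R, ∃ (P : ModuleCat.{u} R) (f : ↥P →ₗ[R] ↥M), C P ∧
    ∀ (P' : ModuleCat.{u} R), C P' → ∀ g : ↥P' →ₗ[R] ↥M,
      ∃ h : ↥P' →ₗ[R] ↥P, f.comp h = g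

/-- `Gen M`: epimorphic images of direct sums of copies of `M`. -/
def GenClass {R : Type u} [Ring R] (M : ModuleCat.{u} R) (N : ModuleCat.{u} R) : Prop :=
  ∃ (ι : Type u) (g : (DirectSum ι (fun _ : ι => ↥M)) →ₗ[R] ↥N), Function.Surjective g

/-- `σ[M]`: the class of modules subgenerated by `M`, i.e. submodules of modules
generated by `M`. -/
def SubGenClass {R : Type u} [Ring R] (M : ModuleCat.{u} R) (N : ModuleCat.{u} R) : Prop :=
  ∃ K : ModuleCat.{u} R, GenClass M K ∧ ∃ i : ↥N →ₗ[R] ↥K, Function.Injective i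

open DirectSum in
/-- A precovering class closed under homomorphic images is closed under direct sums. -/
lemma dsum_mem {R : Type u} [Ring R] (C : ModuleCat.{u} R → Prop)
    (himg : ∀ (M : ModuleCat.{u} R), C M → ∀ (N : ModuleCat.{u} R) (g : ↥M →ₗ[R] ↥N),
      Function.Surjective g → C N)
    (hcov : Precovering C) (ι : Type u) [DecidableEq ι] (A : ι → ModuleCat.{u} R)
    (hA : ∀ i, C (A i)) :
    C (ModuleCat.of R (DirectSum ι (fun i => ↥(A i)))) := by
  set D : ModuleCat.{u} R := ModuleCat.of R (DirectSum ι (fun i => ↥(A i)))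
  obtain ⟨P, f, hP, hfac⟩ := hcov D
  have hsurj : Function.Surjective f := by
    have hrange : ∀ z : ↥D, z ∈ LinearMap.range f := by
      intro z
      induction z using DirectSum.induction_on with
      | zero => exact Submodule.zero_mem _
      | of i x =>
        obtain ⟨h, hh⟩ := hfac (A i) (hA i) (DirectSum.lof R ι (fun i => ↥(A i)) i)
        exact ⟨h x, by rw [← DirectSum.lof_eq_of R, ← hh]; rfl⟩
      | add x y hx hy => exact Submodule.add_mem _ hx hy
    intro z
    obtain ⟨w, hw⟩ := hrange z
    exact ⟨w, hw⟩
  exact himg P hP D f hsurj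

theorem precovering_closed_sub_quot_eq_gen {R : Type u} [Ring R]
    (C : ModuleCat.{u} R → Prop)
    (hsub : ∀ (M : ModuleCat.{u} R), C M → ∀ (N : ModuleCat.{u} R) (i : ↥N →ₗ[R] ↥M),
      Function.Injective i → C N)
    (himg : ∀ (M : ModuleCat.{u} R), C M → ∀ (N : ModuleCat.{u} R) (g : ↥M →ₗ[R] ↥N),
      Function.Surjective g → C N)
    (hcov : Precovering C) :
    ∃ M : ModuleCat.{u} R, (∀ N, C N ↔ GenClass M N) ∧ (∀ N, C N ↔ SubGenClass M N) := by
  classical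
  -- index type: left ideals `I` with `R ⧸ I ∈ C`
  set ι₀ : Type u := {I : Submodule R R // C (ModuleCat.of R (R ⧸ I))} with hι₀
  set W : ModuleCat.{u} R :=
    ModuleCat.of R (DirectSum ι₀ (fun I => ↥(ModuleCat.of R (R ⧸ I.1)))) with hW
  have hCW : C W :=
    dsum_mem C himg hcov ι₀ (fun I => ModuleCat.of R (R ⧸ I.1)) (fun I => I.2)
  -- Gen(W) ⊆ C
  have gen_to_C : ∀ N, GenClass W N → C N := by
    intro N ⟨κ, g, hg⟩
    have hD :=
      dsum_mem C himg hcov κ (fun _ => W) (fun _ => hCW)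
    exact himg _ hD N g hg
  -- C ⊆ Gen(W)
  have C_to_gen : ∀ N, C N → GenClass W N := by
    intro N hN
    -- for each `x : N`, the cyclic module `R ⧸ ann x` lies in `C`
    have key : ∀ x : ↥N, C (ModuleCat.of R
        (R ⧸ LinearMap.ker (LinearMap.toSpanSingleton R ↥N x))) := by
      intro x
      refine hsub N hN _
        ((LinearMap.ker (LinearMap.toSpanSingleton R ↥N x)).liftQ
          (LinearMap.toSpanSingleton R ↥N x) le_rfl) ?_
      rw [← LinearMap.ker_eq_bot]
      exact Submodule.ker_liftQ_eq_bot _ _ _ le_rfl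
    let idx : ↥N → ι₀ := fun x => ⟨LinearMap.ker (LinearMap.toSpanSingleton R ↥N x), key x⟩
    let φ : ∀ x : ↥N, ↥W →ₗ[R] ↥N := fun x =>
      (((idx x).1).liftQ (LinearMap.toSpanSingleton R ↥N x) le_rfl).comp
        (DirectSum.component R ι₀ (fun I => ↥(ModuleCat.of R (R ⧸ I.1))) (idx x))
    refine ⟨↥N, DirectSum.toModule R ↥N ↥N φ, ?_⟩
    intro n
    refine ⟨DirectSum.lof R ↥N (fun _ => ↥W) n
      (DirectSum.lof R ι₀ (fun I => ↥(ModuleCat.of R (R ⧸ I.1))) (idx n)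
        (Submodule.Quotient.mk (1 : R))), ?_⟩
    rw [DirectSum.toModule_lof]
    show (φ n) _ = n
    simp only [φ, LinearMap.comp_apply]
    erw [DirectSum.component.lof_self]
    show (1 : R) • n = n
    exact one_smul R n
  refine ⟨W, fun N => ⟨C_to_gen N, gen_to_C N⟩, fun N => ⟨?_, ?_⟩⟩
  · intro hN
    exact ⟨N, C_to_gen N hN, LinearMap.id, fun _ _ h => h⟩
  · rintro ⟨K, hK, i, hi⟩
    exact hsub K (gen_to_C K hK) N i hi
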